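/- arXiv:1510.06730 — 3 statements merged into one kernel-verified Lean document; each statement's English description precedes it below -/
import Mathlib

section
/- Let q : (0,1] × ℝⁿ × ℝⁿ → [0,∞) be jointly measurable. Assume there are constants C₁, C₂, a > 0, α > 0, N ≥ 0 and t₀ ∈ (0,1) such that for all u ∈ (0,t₀] and all x, y ∈ ℝⁿ: (i) q_u(x,y) ≤ C₁ u^{−N}; (ii) q_u(x,y) ≤ C₁ u^{−N} exp(−C₂ |x−y|^{2α}/u) whenever |x−y| ≥ a√u; and (iii) ∫_{ℝⁿ} q_s(x₀,x) dx ≤ 1 for all s ∈ (0,1]. Then for every p > 0 with (n+p)/2 > N + 1 and (n+p)/(2α) > N + 1, there exist constants C > 0 and δ > 0 such that for all s ∈ (0,1] and all u ∈ (0,t₀], ∫_{ℝⁿ} ∫_{ℝⁿ} |x−y|^p q_s(x₀,x) q_u(x,y) dy dx ≤ C u^{1+δ}. -/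
open MeasureTheory ENNReal

lemma aux_exp_le {m v : ℝ} (hm : 0 < m) (hv : 0 < v) :
    Real.exp (-v) ≤ (Nat.ceil m).factorial * v ^ (-m) := by
  have hK : (1:ℝ) ≤ (Nat.ceil m).factorial := by
    exact_mod_cast Nat.one_le_iff_ne_zero.mpr (Nat.factorial_pos _).ne'
  have hvm : 0 < v ^ m := Real.rpow_pos_of_pos hv _
  rcases le_or_gt 1 v with h1 | h1
  · have hmc : v ^ m ≤ v ^ ((Nat.ceil m : ℕ) : ℝ) :=
      Real.rpow_le_rpow_of_exponent_le h1 (Nat.le_ceil m)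
    rw [Real.rpow_natCast] at hmc
    have h2 : v ^ (Nat.ceil m) / (Nat.ceil m).factorial ≤ Real.exp v :=
      Real.pow_div_factorial_le_exp (x := v) (le_trans zero_le_one h1) ⌈m⌉₊
    rw [div_le_iff₀ (by positivity)] at h2
    have hE := Real.exp_pos v
    rw [Real.rpow_neg hv.le, ← div_eq_mul_inv, le_div_iff₀ hvm, Real.exp_neg]
    calc (Real.exp v)⁻¹ * v ^ m ≤ (Real.exp v)⁻¹ * (v ^ (Nat.ceil m)) := by
          exact mul_le_mul_of_nonneg_left hmc (by positivity)
      _ ≤ (Real.exp v)⁻¹ * (Real.exp v * (Nat.ceil m).factorial) := by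
          exact mul_le_mul_of_nonneg_left h2 (by positivity)
      _ = (Nat.ceil m).factorial := by field_simp
  · have h2 : Real.exp (-v) ≤ 1 := Real.exp_le_one_iff.mpr (by linarith)
    have h3 : (1:ℝ) ≤ v ^ (-m) :=
      Real.one_le_rpow_of_pos_of_le_one_of_nonpos hv h1.le (by linarith)
    nlinarith

lemma aux_annulus {R d : ℝ} (hR : 0 < R) (hd : R ≤ d) :
    ∃ k : ℕ, 2 ^ k * R ≤ d ∧ d < 2 ^ (k + 1) * R := by
  obtain ⟨k, h1, h2⟩ := exists_nat_pow_near (x := d / R) (y := (2:ℝ))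
    ((one_le_div hR).mpr hd) one_lt_two
  exact ⟨k, (le_div_iff₀ hR).mp h1, (div_lt_iff₀ hR).mp h2⟩

lemma aux_key1 (nn : ℕ) (p N u a C₁ : ℝ) (hu : 0 < u) (ha : 0 < a) (hC₁ : 0 < C₁) :
    (a * Real.sqrt u) ^ p * (C₁ * u ^ (-N)) * (a * Real.sqrt u) ^ (nn : ℕ)
      = (C₁ * a ^ ((nn : ℝ) + p)) * u ^ (((nn : ℝ) + p) / 2 - N) := by
  have hsq : 0 < Real.sqrt u := Real.sqrt_pos.mpr hu
  apply Real.log_injOn_pos (Set.mem_Ioi.mpr (by positivity))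
    (Set.mem_Ioi.mpr (by positivity))
  simp (disch := first | positivity | exact (by positivity : (0:ℝ) < _).ne') only
    [Real.log_mul, Real.log_div, Real.log_rpow, Real.log_pow, Real.log_sqrt hu.le]
  push_cast
  ring

lemma aux_key2 (nn k : ℕ) (p α N m u a C₁ C₂ K : ℝ)
    (hm : 0 < m) (hu : 0 < u) (ha : 0 < a)
    (hC₁ : 0 < C₁) (hC₂ : 0 < C₂) (hK : 0 < K) :
    ((2:ℝ) ^ (k+1) * (a * Real.sqrt u)) ^ p *
      (C₁ * u ^ (-N) * (K * (C₂ * ((2:ℝ) ^ k * (a * Real.sqrt u)) ^ (2*α) / u) ^ (-m))) *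
      ((2:ℝ) ^ (k+1) * (a * Real.sqrt u)) ^ (nn : ℕ)
    = (C₁ * K * C₂ ^ (-m) * 2 ^ ((nn:ℝ) + p) * a ^ ((nn:ℝ) + p - 2*α*m)) *
      u ^ (m - N + ((nn:ℝ) + p - 2*α*m)/2) * ((2:ℝ) ^ ((nn:ℝ) + p - 2*α*m)) ^ k := by
  have hsq : 0 < Real.sqrt u := Real.sqrt_pos.mpr hu
  apply Real.log_injOn_pos (Set.mem_Ioi.mpr (by positivity))
    (Set.mem_Ioi.mpr (by positivity))
  simp (disch := first | positivity | exact (by positivity : (0:ℝ) < _).ne') only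
    [Real.log_mul, Real.log_div, Real.log_rpow, Real.log_pow, Real.log_sqrt hu.le]
  push_cast
  ring

/-- on `ℝⁿ`, an on-diagonal bound `q_u(x,y) ≤ C₁ u^{−N}`, an off-diagonal
sub-Gaussian bound with exponent `2α` valid for `|x−y| ≥ a√u`, and sub-probability mass
of the kernels, imply the Kolmogorov-type moment bound
`∫∫ |x−y|^p q_s(x₀,x) q_u(x,y) dy dx ≤ C u^{1+δ}` for every `p` with
`(n+p)/2 > N+1` and `(n+p)/(2α) > N+1`. -/
theorem heat_kernel_moment_bound
    (n : ℕ) (x₀ : EuclideanSpace ℝ (Fin n))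
    (q : ℝ → EuclideanSpace ℝ (Fin n) → EuclideanSpace ℝ (Fin n) → ℝ≥0∞)
    (hq_meas : Measurable
      fun p : ℝ × EuclideanSpace ℝ (Fin n) × EuclideanSpace ℝ (Fin n) => q p.1 p.2.1 p.2.2)
    (C₁ C₂ a α N t₀ : ℝ)
    (hC₁ : 0 < C₁) (hC₂ : 0 < C₂) (ha : 0 < a) (hα : 0 < α) (hN : 0 ≤ N)
    (ht₀ : t₀ ∈ Set.Ioo (0 : ℝ) 1)
    (hondiag : ∀ u ∈ Set.Ioc (0 : ℝ) t₀, ∀ x y, q u x y ≤ ENNReal.ofReal (C₁ * u ^ (-N)))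
    (hoffdiag : ∀ u ∈ Set.Ioc (0 : ℝ) t₀, ∀ x y, a * Real.sqrt u ≤ dist x y →
        q u x y ≤ ENNReal.ofReal (C₁ * u ^ (-N) * Real.exp (-C₂ * dist x y ^ (2 * α) / u)))
    (hmass : ∀ s ∈ Set.Ioc (0 : ℝ) 1, ∫⁻ x, q s x₀ x ≤ 1) :
    ∀ p : ℝ, 0 < p → N + 1 < (n + p) / 2 → N + 1 < (n + p) / (2 * α) →
      ∃ C > (0 : ℝ), ∃ δ > (0 : ℝ), ∀ s ∈ Set.Ioc (0 : ℝ) 1, ∀ u ∈ Set.Ioc (0 : ℝ) t₀,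
        ∫⁻ x, ∫⁻ y, ENNReal.ofReal (dist x y ^ p) * (q s x₀ x * q u x y)
          ≤ ENNReal.ofReal (C * u ^ (1 + δ)) := by
  intro p hp hp1 hp2
  obtain ⟨ht₀0, ht₀1⟩ := ht₀
  rcases Nat.eq_zero_or_pos n with hn0 | hn
  · subst hn0
    refine ⟨1, one_pos, 1, one_pos, fun s hs u hu => ?_⟩
    haveI : Subsingleton (EuclideanSpace ℝ (Fin 0)) := ⟨fun a b => PiLp.ext fun i => i.elim0⟩
    have hz : ∀ x y : EuclideanSpace ℝ (Fin 0), ENNReal.ofReal (dist x y ^ p) = 0 := by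
      intro x y
      have hxy : x = y := Subsingleton.elim x y
      rw [hxy, dist_self, Real.zero_rpow hp.ne', ENNReal.ofReal_zero]
    simp only [hz, zero_mul, lintegral_zero]
    exact zero_le
  haveI : Nontrivial (EuclideanSpace ℝ (Fin n)) := by
    apply Module.nontrivial_of_finrank_pos (R := ℝ)
    rw [finrank_euclideanSpace_fin]
    exact hn
  have hα2 : (0:ℝ) < 2 * α := by linarith
  have hnp : (0:ℝ) < (n:ℝ) + p := add_pos_of_nonneg_of_pos (Nat.cast_nonneg n) hp
  obtain ⟨m, hm, hmlt, he₂⟩ : ∃ m : ℝ, 0 < m ∧ (n:ℝ) + p - 2*α*m < 0 ∧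
      1 < m - N + ((n:ℝ) + p - 2*α*m)/2 := by
    set t : ℝ := ((n:ℝ) + p) / (2*α) with ht_def
    have ht : N + 1 < t := hp2
    set ε : ℝ := (t - (N+1)) / (2*(|1-α|+1)) with hε_def
    have hε : 0 < ε := div_pos (by linarith) (by positivity)
    have h2a : (n:ℝ) + p = 2*α*t := by rw [ht_def]; field_simp
    refine ⟨t + ε, by linarith, by rw [h2a]; nlinarith, ?_⟩
    have hh1 : ε * (|1-α|+1) = (t - (N+1))/2 := by
      rw [hε_def]; field_simp
    have h3 : ε*(α-1) ≤ ε*|1-α| :=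
      mul_le_mul_of_nonneg_left (by rw [abs_sub_comm]; exact le_abs_self _) hε.le
    have habs : 0 ≤ |1-α| := abs_nonneg _
    have goal_eq : (t+ε) - N + (((n:ℝ)+p) - 2*α*(t+ε))/2 = t - N - ε*(α-1) := by
      rw [h2a]; ring
    rw [goal_eq]
    nlinarith
  obtain ⟨δ, hδ, hδ1, hδ2⟩ : ∃ δ : ℝ, 0 < δ ∧ 1 + δ ≤ ((n:ℝ)+p)/2 - N ∧
      1 + δ ≤ m - N + ((n:ℝ) + p - 2*α*m)/2 := by
    refine ⟨min (((n:ℝ)+p)/2 - N) (m - N + ((n:ℝ)+p - 2*α*m)/2) - 1, ?_, ?_, ?_⟩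
    · have h1 : (1:ℝ) < ((n:ℝ)+p)/2 - N := by linarith
      have := lt_min h1 he₂
      linarith
    · have := min_le_left (((n:ℝ)+p)/2 - N) (m - N + ((n:ℝ)+p - 2*α*m)/2)
      linarith
    · have := min_le_right (((n:ℝ)+p)/2 - N) (m - N + ((n:ℝ)+p - 2*α*m)/2)
      linarith
  set K : ℝ := ((Nat.ceil m).factorial : ℝ) with hK_def
  have hK : 0 < K := by rw [hK_def]; exact_mod_cast Nat.factorial_pos _
  set A : ℝ := C₁ * a ^ ((n:ℝ) + p) with hA_def
  set B : ℝ := C₁ * K * C₂ ^ (-m) * 2 ^ ((n:ℝ) + p) * a ^ ((n:ℝ) + p - 2*α*m) with hB_def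
  have hA : 0 < A := by rw [hA_def]; positivity
  have hB : 0 < B := by rw [hB_def]; positivity
  set θ : ℝ := (2:ℝ) ^ ((n:ℝ) + p - 2*α*m) with hθ_def
  have hθ0 : 0 < θ := Real.rpow_pos_of_pos two_pos _
  have hθ1 : θ < 1 := by
    rw [hθ_def]
    exact Real.rpow_lt_one_of_one_lt_of_neg one_lt_two hmlt
  set Vb : ℝ≥0∞ := volume (Metric.ball (0 : EuclideanSpace ℝ (Fin n)) 1) with hVb_def
  have hVb : Vb ≠ ⊤ := measure_ball_lt_top.ne
  set S : ℝ≥0∞ := (1 - ENNReal.ofReal θ)⁻¹ with hS_def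
  have hθE : ENNReal.ofReal θ < 1 := ENNReal.ofReal_lt_one.mpr hθ1
  have hS : S ≠ ⊤ := by
    rw [hS_def]
    exact ENNReal.inv_ne_top.mpr (tsub_pos_of_lt hθE).ne'
  set Ctot : ℝ≥0∞ := ENNReal.ofReal A * Vb + ENNReal.ofReal B * Vb * S with hCtot_def
  have hCtotT : Ctot ≠ ⊤ := by
    rw [hCtot_def]
    exact ENNReal.add_ne_top.mpr ⟨ENNReal.mul_ne_top ENNReal.ofReal_ne_top hVb,
      ENNReal.mul_ne_top (ENNReal.mul_ne_top ENNReal.ofReal_ne_top hVb) hS⟩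
  refine ⟨Ctot.toReal + 1, by positivity, δ, hδ, fun s hs u hu => ?_⟩
  obtain ⟨hu0, hut⟩ := hu
  have hu1 : u < 1 := lt_of_le_of_lt hut ht₀1
  set R : ℝ := a * Real.sqrt u with hR_def
  have hsq : 0 < Real.sqrt u := Real.sqrt_pos.mpr hu0
  have hR : 0 < R := by rw [hR_def]; positivity
  have hqum : ∀ x, Measurable (fun y => q u x y) := fun x =>
    hq_meas.comp (measurable_const.prodMk (measurable_const.prodMk measurable_id))
  have hfm : ∀ x : EuclideanSpace ℝ (Fin n),
      Measurable (fun y => ENNReal.ofReal (dist x y ^ p) * q u x y) := fun x =>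
    (((measurable_const.dist measurable_id).pow measurable_const).ennreal_ofReal).mul (hqum x)
  have hup : ∀ e : ℝ, 1 + δ ≤ e → u ^ e ≤ u ^ (1+δ) := fun e he =>
    Real.rpow_le_rpow_of_exponent_ge hu0 hu1.le he
  -- the inner integral bound
  have hinner : ∀ x, (∫⁻ y, ENNReal.ofReal (dist x y ^ p) * q u x y)
      ≤ Ctot * ENNReal.ofReal (u ^ (1+δ)) := by
    intro x
    rw [← lintegral_add_compl (fun y => ENNReal.ofReal (dist x y ^ p) * q u x y)
      (measurableSet_ball (x := x) (ε := R)), hCtot_def, add_mul]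
    apply add_le_add
    · -- near part
      calc ∫⁻ y in Metric.ball x R, ENNReal.ofReal (dist x y ^ p) * q u x y
          ≤ ∫⁻ _ in Metric.ball x R, ENNReal.ofReal (R ^ p * (C₁ * u ^ (-N))) := by
            apply setLIntegral_mono' measurableSet_ball
            intro y hy
            rw [ENNReal.ofReal_mul (by positivity : (0:ℝ) ≤ R ^ p)]
            apply mul_le_mul'
            · apply ENNReal.ofReal_le_ofReal
              apply Real.rpow_le_rpow dist_nonneg ?_ hp.le
              rw [dist_comm]
              exact (Metric.mem_ball.mp hy).le
            · exact hondiag u ⟨hu0, hut⟩ x y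
        _ = ENNReal.ofReal (R ^ p * (C₁ * u ^ (-N))) * volume (Metric.ball x R) :=
            setLIntegral_const _ _
        _ = ENNReal.ofReal (R ^ p * (C₁ * u ^ (-N))) * (ENNReal.ofReal (R ^ n) * Vb) := by
            rw [Measure.addHaar_ball volume x hR.le, finrank_euclideanSpace_fin, hVb_def]
        _ = ENNReal.ofReal (R ^ p * (C₁ * u ^ (-N)) * R ^ n) * Vb := by
            rw [← mul_assoc, ← ENNReal.ofReal_mul (by positivity : (0:ℝ) ≤ R ^ p * (C₁ * u ^ (-N)))]
        _ ≤ ENNReal.ofReal (A * u ^ (1+δ)) * Vb := by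
            apply mul_le_mul_left
            apply ENNReal.ofReal_le_ofReal
            have hkey : R ^ p * (C₁ * u ^ (-N)) * R ^ (n : ℕ)
                = A * u ^ (((n:ℝ)+p)/2 - N) := by
              rw [hR_def, hA_def]
              exact aux_key1 n p N u a C₁ hu0 ha hC₁
            rw [hkey]
            exact mul_le_mul_of_nonneg_left (hup _ hδ1) hA.le
        _ = ENNReal.ofReal A * Vb * ENNReal.ofReal (u ^ (1+δ)) := by
            rw [ENNReal.ofReal_mul hA.le]; ring
    · -- far part
      have hterm : ∀ k : ℕ,
          (∫⁻ y in Metric.ball x (2^(k+1) * R) \ Metric.ball x (2^k * R),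
            ENNReal.ofReal (dist x y ^ p) * q u x y)
          ≤ ENNReal.ofReal (B * u ^ (1+δ)) * (ENNReal.ofReal θ)^k * Vb := by
        intro k
        have hP : (0:ℝ) < 2^(k+1) * R := by positivity
        have hQ : (0:ℝ) < 2^k * R := by positivity
        have hpoint : ∀ y ∈ Metric.ball x (2^(k+1) * R) \ Metric.ball x (2^k * R),
            ENNReal.ofReal (dist x y ^ p) * q u x y ≤
            ENNReal.ofReal ((2^(k+1) * R) ^ p *
              (C₁ * u ^ (-N) * (K * (C₂ * (2^k * R) ^ (2*α) / u) ^ (-m)))) := by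
          intro y hy
          obtain ⟨hy1, hy2⟩ := hy
          have hd_hi : dist x y < 2^(k+1) * R := by
            rw [dist_comm]; exact Metric.mem_ball.mp hy1
          have hd_lo : 2^k * R ≤ dist x y := by
            rw [dist_comm]
            exact le_of_not_gt fun h => hy2 (Metric.mem_ball.mpr h)
          have hd0 : 0 < dist x y := lt_of_lt_of_le hQ hd_lo
          have hRd : a * Real.sqrt u ≤ dist x y := by
            rw [← hR_def]
            exact le_trans (le_mul_of_one_le_left hR.le (one_le_pow₀ one_le_two)) hd_lo
          have hv : 0 < C₂ * dist x y ^ (2*α) / u := by positivity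
          calc ENNReal.ofReal (dist x y ^ p) * q u x y
              ≤ ENNReal.ofReal ((2^(k+1) * R) ^ p) *
                ENNReal.ofReal (C₁ * u ^ (-N) * Real.exp (-C₂ * dist x y ^ (2*α) / u)) :=
                mul_le_mul'
                  (ENNReal.ofReal_le_ofReal (Real.rpow_le_rpow dist_nonneg hd_hi.le hp.le))
                  (hoffdiag u ⟨hu0, hut⟩ x y hRd)
            _ = ENNReal.ofReal ((2^(k+1) * R) ^ p *
                  (C₁ * u ^ (-N) * Real.exp (-C₂ * dist x y ^ (2*α) / u))) :=
                (ENNReal.ofReal_mul (by positivity)).symm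
            _ ≤ _ := by
                apply ENNReal.ofReal_le_ofReal
                have e1 : Real.exp (-C₂ * dist x y ^ (2*α) / u)
                    ≤ K * (C₂ * dist x y ^ (2*α) / u) ^ (-m) := by
                  rw [show -C₂ * dist x y ^ (2*α) / u = -(C₂ * dist x y ^ (2*α) / u) by ring,
                    hK_def]
                  exact aux_exp_le hm hv
                have e2 : (C₂ * dist x y ^ (2*α) / u) ^ (-m)
                    ≤ (C₂ * (2^k * R) ^ (2*α) / u) ^ (-m) := by
                  apply Real.rpow_le_rpow_of_nonpos (by positivity) ?_ (by linarith : -m ≤ 0)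
                  have hbd : (2^k * R) ^ (2*α) ≤ dist x y ^ (2*α) :=
                    Real.rpow_le_rpow hQ.le hd_lo (by positivity)
                  exact (div_le_div_iff_of_pos_right hu0).mpr (mul_le_mul_of_nonneg_left hbd hC₂.le)
                have e3 : Real.exp (-C₂ * dist x y ^ (2*α) / u)
                    ≤ K * (C₂ * (2^k * R) ^ (2*α) / u) ^ (-m) :=
                  e1.trans (mul_le_mul_of_nonneg_left e2 hK.le)
                apply mul_le_mul_of_nonneg_left ?_ (by positivity : (0:ℝ) ≤ (2^(k+1)*R)^p)
                exact mul_le_mul_of_nonneg_left e3 (by positivity)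
        calc (∫⁻ y in Metric.ball x (2^(k+1) * R) \ Metric.ball x (2^k * R),
              ENNReal.ofReal (dist x y ^ p) * q u x y)
            ≤ ∫⁻ _ in Metric.ball x (2^(k+1) * R) \ Metric.ball x (2^k * R),
              ENNReal.ofReal ((2^(k+1) * R) ^ p *
                (C₁ * u ^ (-N) * (K * (C₂ * (2^k * R) ^ (2*α) / u) ^ (-m)))) :=
              setLIntegral_mono' (measurableSet_ball.diff measurableSet_ball) hpoint
          _ = ENNReal.ofReal ((2^(k+1) * R) ^ p *
                (C₁ * u ^ (-N) * (K * (C₂ * (2^k * R) ^ (2*α) / u) ^ (-m)))) *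
              volume (Metric.ball x (2^(k+1) * R) \ Metric.ball x (2^k * R)) :=
              setLIntegral_const _ _
          _ ≤ ENNReal.ofReal ((2^(k+1) * R) ^ p *
                (C₁ * u ^ (-N) * (K * (C₂ * (2^k * R) ^ (2*α) / u) ^ (-m)))) *
              volume (Metric.ball x (2^(k+1) * R)) :=
              mul_le_mul_right (measure_mono Set.diff_subset) _
          _ = ENNReal.ofReal ((2^(k+1) * R) ^ p *
                (C₁ * u ^ (-N) * (K * (C₂ * (2^k * R) ^ (2*α) / u) ^ (-m))) *
                (2^(k+1) * R) ^ (n:ℕ)) * Vb := by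
              rw [Measure.addHaar_ball volume x hP.le, finrank_euclideanSpace_fin, hVb_def,
                ← mul_assoc, ← ENNReal.ofReal_mul (by positivity)]
          _ ≤ ENNReal.ofReal (B * u ^ (1+δ) * θ^k) * Vb := by
              apply mul_le_mul_left
              apply ENNReal.ofReal_le_ofReal
              have hkey : (2^(k+1) * R) ^ p *
                  (C₁ * u ^ (-N) * (K * (C₂ * (2^k * R) ^ (2*α) / u) ^ (-m))) *
                  (2^(k+1) * R) ^ (n:ℕ)
                  = B * u ^ (m - N + ((n:ℝ)+p - 2*α*m)/2) * θ^k := by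
                rw [hR_def, hB_def, hθ_def]
                exact aux_key2 n k p α N m u a C₁ C₂ K hm hu0 ha hC₁ hC₂ hK
              rw [hkey]
              exact mul_le_mul_of_nonneg_right
                (mul_le_mul_of_nonneg_left (hup _ hδ2) hB.le) (by positivity)
          _ = ENNReal.ofReal (B * u ^ (1+δ)) * (ENNReal.ofReal θ)^k * Vb := by
              rw [ENNReal.ofReal_mul (by positivity), ENNReal.ofReal_pow hθ0.le]
      have hsub : (Metric.ball x R)ᶜ ⊆
          ⋃ k : ℕ, (Metric.ball x (2^(k+1) * R) \ Metric.ball x (2^k * R)) := by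
        intro y hy
        simp only [Set.mem_compl_iff, Metric.mem_ball, not_lt] at hy
        obtain ⟨k, h1, h2⟩ := aux_annulus hR hy
        refine Set.mem_iUnion.mpr ⟨k, Metric.mem_ball.mpr h2, fun hmem => ?_⟩
        exact absurd (Metric.mem_ball.mp hmem) (not_lt.mpr h1)
      calc ∫⁻ y in (Metric.ball x R)ᶜ, ENNReal.ofReal (dist x y ^ p) * q u x y
          ≤ ∫⁻ y in ⋃ k : ℕ, (Metric.ball x (2^(k+1) * R) \ Metric.ball x (2^k * R)),
            ENNReal.ofReal (dist x y ^ p) * q u x y := lintegral_mono_set hsub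
        _ ≤ ∑' k : ℕ, ∫⁻ y in Metric.ball x (2^(k+1) * R) \ Metric.ball x (2^k * R),
            ENNReal.ofReal (dist x y ^ p) * q u x y := lintegral_iUnion_le _ _
        _ ≤ ∑' k : ℕ, ENNReal.ofReal (B * u ^ (1+δ)) * (ENNReal.ofReal θ)^k * Vb :=
            ENNReal.tsum_le_tsum hterm
        _ = (ENNReal.ofReal (B * u ^ (1+δ)) * Vb) * ∑' k : ℕ, (ENNReal.ofReal θ)^k := by
            rw [← ENNReal.tsum_mul_left]
            congr 1; funext k; ring
        _ = ENNReal.ofReal B * Vb * S * ENNReal.ofReal (u ^ (1+δ)) := by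
            rw [ENNReal.tsum_geometric, ← hS_def, ENNReal.ofReal_mul hB.le]; ring
  -- assemble the outer integral
  calc ∫⁻ x, ∫⁻ y, ENNReal.ofReal (dist x y ^ p) * (q s x₀ x * q u x y)
      = ∫⁻ x, q s x₀ x * ∫⁻ y, ENNReal.ofReal (dist x y ^ p) * q u x y := by
        apply lintegral_congr
        intro x
        rw [← lintegral_const_mul (q s x₀ x) (hfm x)]
        apply lintegral_congr
        intro y
        ring
    _ ≤ ∫⁻ x, q s x₀ x * (Ctot * ENNReal.ofReal (u ^ (1+δ))) :=
        lintegral_mono fun x => mul_le_mul_right (hinner x) _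
    _ = (∫⁻ x, q s x₀ x) * (Ctot * ENNReal.ofReal (u ^ (1+δ))) :=
        lintegral_mul_const' _ _ (ENNReal.mul_ne_top hCtotT ENNReal.ofReal_ne_top)
    _ ≤ 1 * (Ctot * ENNReal.ofReal (u ^ (1+δ))) := mul_le_mul_left (hmass s hs) _
    _ ≤ ENNReal.ofReal ((Ctot.toReal + 1) * u ^ (1+δ)) := by
        rw [one_mul, ENNReal.ofReal_mul (by positivity)]
        apply mul_le_mul_left
        calc Ctot = ENNReal.ofReal Ctot.toReal := (ENNReal.ofReal_toReal hCtotT).symm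
          _ ≤ ENNReal.ofReal (Ctot.toReal + 1) := ENNReal.ofReal_le_ofReal (by linarith)
end

section
/- Let (M, 𝔐, μ) be a σ-finite measure space and q : (0,1] × M × M → [0,∞) jointly measurable and satisfying the Chapman–Kolmogorov identity. Fix x₀, y₀ ∈ M with 0 < q₁(x₀,y₀) < ∞, times 0 < t₁ < ⋯ < t_n < 1 with n ≥ 1, and an index 1 ≤ j ≤ n. Then for all x₁, …, x_{j−1}, x_{j+1}, …, x_n ∈ M, ∫_M q^{x₀,y₀}_{t₁,…,t_n}(x₁,…,x_n) dμ(x_j) = q^{x₀,y₀}_{t₁,…,t_{j−1},t_{j+1},…,t_n}(x₁,…,x_{j−1},x_{j+1},…,x_n), where for n = 1 the right-hand side is interpreted as the constant 1. That is, the bridge finite-dimensional densities form a consistent (projective) family. -/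
open MeasureTheory ENNReal

/-- The unnormalized bridge chain density
`q_{t₁}(x₀,x₁) q_{t₂−t₁}(x₁,x₂) ⋯ q_{t_k−t_{k−1}}(x_{k−1},x_k) q_{1−t_k}(x_k,y₀)`,
encoded by prepending time `0` and point `x₀` and appending time `1` and point `y₀`. -/
noncomputable def bridgeChain {M : Type*} (q : ℝ → M → M → ℝ≥0∞) (x₀ y₀ : M)
    {k : ℕ} (t : Fin k → ℝ) (x : Fin k → M) : ℝ≥0∞ :=
  let T : Fin (k + 2) → ℝ := Fin.snoc (Fin.cons 0 t) 1
  let Y : Fin (k + 2) → M := Fin.snoc (Fin.cons x₀ x) y₀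
  ∏ i : Fin (k + 1), q (T i.succ - T i.castSucc) (Y i.castSucc) (Y i.succ)

/-- The bridge finite-dimensional density `q^{x₀,y₀}_{t₁,…,t_k}(x₁,…,x_k)`. For `k = 0`
(no intermediate times) it equals `q₁(x₀,y₀)⁻¹ q₁(x₀,y₀)`, i.e. the constant `1` whenever
`0 < q₁(x₀,y₀) < ∞`. -/
noncomputable def bridgeFDD {M : Type*} (q : ℝ → M → M → ℝ≥0∞) (x₀ y₀ : M)
    {k : ℕ} (t : Fin k → ℝ) (x : Fin k → M) : ℝ≥0∞ :=
  (q 1 x₀ y₀)⁻¹ * bridgeChain q x₀ y₀ t x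

/-- `Fin.cons` commutes with `Fin.insertNth` (non-dependent version). -/
lemma cons_insertNth_aux {α : Type*} {k : ℕ} (c a : α) (p : Fin (k + 1)) (u : Fin k → α) :
    Fin.cons c (p.insertNth a u) = Fin.insertNth (α := fun _ => α) p.succ a (Fin.cons c u) := by
  rw [eq_comm, Fin.insertNth_eq_iff]
  refine ⟨by simp, ?_⟩
  funext i
  induction i using Fin.cases with
  | zero => simp [Fin.removeNth]
  | succ m => simp [Fin.removeNth, Fin.succ_succAbove_succ]

/-- `Fin.snoc` commutes with `Fin.insertNth` (non-dependent version). -/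
lemma snoc_insertNth_aux {α : Type*} {k : ℕ} (d a : α) (p : Fin (k + 1)) (v : Fin k → α) :
    Fin.snoc (p.insertNth a v) d = Fin.insertNth (α := fun _ => α) p.castSucc a (Fin.snoc v d) := by
  rw [eq_comm, Fin.insertNth_eq_iff]
  refine ⟨by simp, ?_⟩
  funext i
  induction i using Fin.lastCases with
  | last =>
      simp only [Fin.removeNth]
      rw [Fin.succAbove_castSucc_of_le p (Fin.last k) (Fin.le_last p),
        Fin.succ_last, Fin.snoc_last, Fin.snoc_last]
  | cast m =>
      simp only [Fin.removeNth]
      rw [Fin.castSucc_succAbove_castSucc, Fin.snoc_castSucc,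
        Fin.snoc_castSucc, Fin.insertNth_apply_succAbove]

lemma succAbove_succ_eq_succAbove_castSucc {k : ℕ} (j l : Fin (k + 1)) (h : l ≠ j) :
    j.succ.succAbove l = j.castSucc.succAbove l := by
  rcases lt_or_gt_of_ne h with h' | h'
  · rw [Fin.succAbove_succ_of_le _ _ h'.le, Fin.succAbove_castSucc_of_lt _ _ h']
  · rw [Fin.succAbove_succ_of_lt _ _ h', Fin.succAbove_castSucc_of_le _ _ h'.le]

/-- under the Chapman–Kolmogorov identity, integrating the bridge
finite-dimensional density at times `t₁ < ⋯ < t_{n+1}` over its `j`-th coordinate yields the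
bridge finite-dimensional density at the times with `t_j` removed: the bridge
finite-dimensional densities form a consistent (projective) family. -/
theorem bridge_fdd_consistent
    {M : Type*} [MeasurableSpace M] (μ : Measure M) [SigmaFinite μ]
    (q : ℝ → M → M → ℝ≥0∞)
    (hq_meas : Measurable fun p : ℝ × M × M => q p.1 p.2.1 p.2.2)
    (hCK : ∀ a b : ℝ, 0 < a → 0 < b → a + b ≤ 1 → ∀ x y : M,
      ∫⁻ z, q a x z * q b z y ∂μ = q (a + b) x y)
    (x₀ y₀ : M) (hq₁_pos : 0 < q 1 x₀ y₀) (hq₁_fin : q 1 x₀ y₀ < ⊤)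
    (n : ℕ) (t : Fin (n + 1) → ℝ)
    (ht_mono : StrictMono t) (ht0 : 0 < t 0) (htn : t (Fin.last n) < 1)
    (j : Fin (n + 1)) (x : Fin n → M) :
    ∫⁻ z, bridgeFDD q x₀ y₀ t (Fin.insertNth j z x) ∂μ
      = bridgeFDD q x₀ y₀ (fun i => t (j.succAbove i)) x := by
  classical
  set s : Fin n → ℝ := fun i => t (j.succAbove i) with hs
  set T' : Fin (n + 3) → ℝ := Fin.snoc (Fin.cons 0 t) 1 with hT'def
  set T : Fin (n + 2) → ℝ := Fin.snoc (Fin.cons 0 s) 1 with hTdef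
  set Y : Fin (n + 2) → M := Fin.snoc (Fin.cons x₀ x) y₀ with hYdef
  set p : Fin (n + 3) := j.succ.castSucc with hpdef
  -- the big time sequence is obtained from the small one by inserting `t j` at `p`
  have ht : t = j.insertNth (t j) s := (Fin.insertNth_self_removeNth j t).symm
  have hT' : T' = Fin.insertNth (α := fun _ => ℝ) p (t j) T := by
    rw [hT'def, hpdef]
    conv_lhs => rw [ht]
    rw [cons_insertNth_aux, snoc_insertNth_aux]
  have hY' : ∀ z : M, (Fin.snoc (Fin.cons x₀ (j.insertNth z x)) y₀ : Fin (n + 3) → M)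
      = Fin.insertNth (α := fun _ => M) p z Y := by
    intro z
    rw [hpdef, hYdef, cons_insertNth_aux, snoc_insertNth_aux]
  -- evaluation of `T'`
  have hT'0 : T' 0 = 0 := by
    show T' ((0 : Fin (n + 2)).castSucc) = 0
    rw [hT'def, Fin.snoc_castSucc, Fin.cons_zero]
  have hT'mid : ∀ i : Fin (n + 1), T' i.succ.castSucc = t i := by
    intro i; rw [hT'def, Fin.snoc_castSucc, Fin.cons_succ]
  have hT'last : T' (Fin.last (n + 2)) = 1 := by
    rw [hT'def, Fin.snoc_last]
  -- strict monotonicity of `T'`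
  have hmono : StrictMono T' := by
    refine Fin.strictMono_iff_lt_succ.2 ?_
    intro i
    induction i using Fin.cases with
    | zero =>
        have h1 : (0 : Fin (n + 2)).succ = (0 : Fin (n + 1)).succ.castSucc := by
          apply Fin.ext; simp
        rw [Fin.castSucc_zero, hT'0, h1, hT'mid]
        exact ht0
    | succ m =>
        rw [hT'mid m]
        induction m using Fin.lastCases with
        | last =>
            have h1 : (Fin.last n).succ.succ = Fin.last (n + 2) := by
              apply Fin.ext; simp
            rw [h1, hT'last]; exact htn
        | cast c =>
            have h1 : c.castSucc.succ.succ = c.succ.succ.castSucc := by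
              apply Fin.ext; simp
            rw [h1, hT'mid]
            exact ht_mono (Fin.castSucc_lt_succ : c.castSucc < c.succ)
  -- key index identities
  have hidx1 : p.succAbove j.castSucc = j.castSucc.castSucc := by
    rw [hpdef, ← Fin.succ_castSucc]
    exact Fin.succAbove_succ_of_le _ _ le_rfl
  have hidx2 : p.succAbove j.succ = j.succ.succ := by
    rw [hpdef]
    exact Fin.succAbove_castSucc_of_le _ _ le_rfl
  -- values of `T` near `j`
  have hTc : T j.castSucc = T' j.castSucc.castSucc := by
    rw [hT', ← hidx1, Fin.insertNth_apply_succAbove]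
  have hTs : T j.succ = T' j.succ.succ := by
    rw [hT', ← hidx2, Fin.insertNth_apply_succAbove]
  have hTp : T' p = t j := by rw [hT', Fin.insertNth_apply_same]
  -- order facts
  have ha_pos : 0 < t j - T j.castSucc := by
    have : T' j.castSucc.castSucc < T' p := by
      apply hmono
      rw [hpdef, ← Fin.succ_castSucc]
      exact Fin.castSucc_lt_succ
    rw [hTc]; rw [hTp] at this; linarith
  have hb_pos : 0 < T j.succ - t j := by
    have : T' p < T' j.succ.succ := by
      apply hmono
      rw [hpdef]
      exact Fin.castSucc_lt_succ
    rw [hTs]; rw [hTp] at this; linarith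
  have hsum : (t j - T j.castSucc) + (T j.succ - t j) ≤ 1 := by
    have h1 : T' j.succ.succ ≤ T' (Fin.last (n + 2)) := hmono.monotone (Fin.le_last _)
    have h2 : T' 0 ≤ T' j.castSucc.castSucc := hmono.monotone (Fin.zero_le _)
    rw [hT'last] at h1; rw [hT'0] at h2
    rw [hTc, hTs]; linarith
  -- the factors
  set F : M → Fin (n + 2) → ℝ≥0∞ := fun z i =>
    q (T' i.succ - T' i.castSucc) (Fin.insertNth (α := fun _ => M) p z Y i.castSucc) (Fin.insertNth (α := fun _ => M) p z Y i.succ)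
    with hFdef
  set G : Fin (n + 1) → ℝ≥0∞ := fun l =>
    q (T l.succ - T l.castSucc) (Y l.castSucc) (Y l.succ) with hGdef
  have hchain : ∀ z : M, bridgeChain q x₀ y₀ t (j.insertNth z x)
      = ∏ i : Fin (n + 2), F z i := by
    intro z
    show (∏ i : Fin (n + 2), q (T' i.succ - T' i.castSucc)
        ((Fin.snoc (Fin.cons x₀ (j.insertNth z x)) y₀ : Fin (n + 3) → M) i.castSucc)
        ((Fin.snoc (Fin.cons x₀ (j.insertNth z x)) y₀ : Fin (n + 3) → M) i.succ))
      = ∏ i : Fin (n + 2), F z i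
    rw [hY' z]
  have hsmall : bridgeChain q x₀ y₀ s x = ∏ i : Fin (n + 1), G i := rfl
  -- generic factor identity away from `j`
  have hfac : ∀ (z : M) (l : Fin (n + 1)), l ≠ j → F z (j.castSucc.succAbove l) = G l := by
    intro z l hl
    have h1 : (j.castSucc.succAbove l).castSucc = p.succAbove l.castSucc := by
      rw [← succAbove_succ_eq_succAbove_castSucc j l hl, hpdef,
        Fin.castSucc_succAbove_castSucc]
    have h2 : (j.castSucc.succAbove l).succ = p.succAbove l.succ := by
      rw [hpdef, ← Fin.succ_castSucc, Fin.succ_succAbove_succ]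
    simp only [hFdef, hGdef]
    rw [h1, h2, hT']
    simp only [Fin.insertNth_apply_succAbove]
  -- the two factors involving `z`
  have hmidL : ∀ z : M, F z j.castSucc = q (t j - T j.castSucc) (Y j.castSucc) z := by
    intro z
    have e1 : j.castSucc.succ = p := by rw [hpdef, Fin.succ_castSucc]
    simp only [hFdef]
    rw [e1, ← hidx1, Fin.insertNth_apply_same, Fin.insertNth_apply_succAbove, hTp,
      hT', Fin.insertNth_apply_succAbove]
  have hmidR : ∀ z : M, F z j.succ = q (T j.succ - t j) z (Y j.succ) := by
    intro z
    have e1 : j.succ.castSucc = p := rfl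
    simp only [hFdef]
    rw [e1, ← hidx2, Fin.insertNth_apply_same, Fin.insertNth_apply_succAbove, hTp,
      hT', Fin.insertNth_apply_succAbove]
  -- product decomposition
  set C : ℝ≥0∞ := ∏ i : Fin n, G (j.succAbove i) with hCdef
  have hprod : ∀ z : M, (∏ i : Fin (n + 2), F z i)
      = (q (t j - T j.castSucc) (Y j.castSucc) z * q (T j.succ - t j) z (Y j.succ)) * C := by
    intro z
    rw [Fin.prod_univ_succAbove (F z) j.castSucc,
      Fin.prod_univ_succAbove (fun i => F z (j.castSucc.succAbove i)) j,
      Fin.succAbove_castSucc_self]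
    rw [Finset.prod_congr rfl fun i _ => hfac z (j.succAbove i) (Fin.succAbove_ne j i)]
    rw [hmidL z, hmidR z, ← mul_assoc]
  -- measurability of the middle part
  have hg : Measurable fun z : M =>
      q (t j - T j.castSucc) (Y j.castSucc) z * q (T j.succ - t j) z (Y j.succ) := by
    have h1 : Measurable fun z : M => q (t j - T j.castSucc) (Y j.castSucc) z :=
      hq_meas.comp (measurable_const.prodMk (measurable_const.prodMk measurable_id))
    have h2 : Measurable fun z : M => q (T j.succ - t j) z (Y j.succ) :=
      hq_meas.comp (measurable_const.prodMk (measurable_id.prodMk measurable_const))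
    exact h1.mul h2
  -- now compute the integral
  have hCK' : ∫⁻ z, q (t j - T j.castSucc) (Y j.castSucc) z
      * q (T j.succ - t j) z (Y j.succ) ∂μ = G j := by
    rw [hCK _ _ ha_pos hb_pos hsum]
    have : (t j - T j.castSucc) + (T j.succ - t j) = T j.succ - T j.castSucc := by ring
    rw [this]
  calc ∫⁻ z, bridgeFDD q x₀ y₀ t (Fin.insertNth j z x) ∂μ
      = ∫⁻ z, (q 1 x₀ y₀)⁻¹ * ((q (t j - T j.castSucc) (Y j.castSucc) z
          * q (T j.succ - t j) z (Y j.succ)) * C) ∂μ := by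
        refine lintegral_congr fun z => ?_
        rw [bridgeFDD, hchain z, hprod z]
    _ = (q 1 x₀ y₀)⁻¹ * ∫⁻ z, (q (t j - T j.castSucc) (Y j.castSucc) z
          * q (T j.succ - t j) z (Y j.succ)) * C ∂μ :=
        lintegral_const_mul' _ _ (ENNReal.inv_ne_top.2 hq₁_pos.ne')
    _ = (q 1 x₀ y₀)⁻¹ * ((∫⁻ z, q (t j - T j.castSucc) (Y j.castSucc) z
          * q (T j.succ - t j) z (Y j.succ) ∂μ) * C) := by
        rw [lintegral_mul_const C hg]
    _ = (q 1 x₀ y₀)⁻¹ * (G j * C) := by rw [hCK']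
    _ = bridgeFDD q x₀ y₀ (fun i => t (j.succAbove i)) x := by
        rw [bridgeFDD, ← hs, hsmall, Fin.prod_univ_succAbove G j, hCdef]
end

section
/- Let q : (0,1] × ℝⁿ × ℝⁿ → [0,∞) be jointly measurable. Assume: (i) there are constants C₁, C₂, a > 0, α > 0, N ≥ 0 and t₀ ∈ (0,1/4) such that for all u ∈ (0,t₀] and all x, y ∈ ℝⁿ, q_u(x,y) ≤ C₁ u^{−N}, and q_u(x,y) ≤ C₁ u^{−N} exp(−C₂ |x−y|^{2α}/u) whenever |x−y| ≥ a√u; (ii) K := sup_{r ∈ [1/4,1]} sup_{x,y ∈ ℝⁿ} q_r(x,y) < ∞; (iii) ∫_{ℝⁿ} q_s(x,y) dy ≤ 1 and ∫_{ℝⁿ} q_s(x,y) dx ≤ 1 for all s ∈ (0,1] and all x, y respectively. Fix x₀, y₀ ∈ ℝⁿ with 0 < q₁(x₀,y₀) < ∞. Then for every p > 0 with (n+p)/2 > N + 1 and (n+p)/(2α) > N + 1, there exist constants C > 0 and δ > 0 such that for all 0 ≤ s < t ≤ 1 with t − s ≤ t₀, the bridge two-point moment of order p satisfies E[|y_s −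 y_t|^p] ≤ C (t−s)^{1+δ}. -/
open MeasureTheory ENNReal Metric


/-- `exp (-x) ≤ m^m * x^(-m)` for positive `x, m`. -/
lemma aux_exp_neg_le {x m : ℝ} (hx : 0 < x) (hm : 0 < m) :
    Real.exp (-x) ≤ m ^ m * x ^ (-m) := by
  have h1 : x ^ m ≤ m ^ m * Real.exp x := by
    have hlog : Real.log (x / m) ≤ x / m - 1 := Real.log_le_sub_one_of_pos (by positivity)
    have hlog2 : Real.log x ≤ Real.log m + x / m := by
      rw [Real.log_div hx.ne' hm.ne'] at hlog
      nlinarith [hlog]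
    calc x ^ m = Real.exp (Real.log x * m) := by rw [Real.rpow_def_of_pos hx]
      _ ≤ Real.exp ((Real.log m + x / m) * m) :=
          Real.exp_le_exp.2 (by nlinarith)
      _ = Real.exp (Real.log m * m) * Real.exp x := by
          rw [← Real.exp_add]; ring_nf; field_simp
      _ = m ^ m * Real.exp x := by rw [← Real.rpow_def_of_pos hm]
  have h2 : x ^ m * Real.exp (-x) ≤ m ^ m := by
    rw [Real.exp_neg]
    have := mul_le_mul_of_nonneg_right h1 (le_of_lt (inv_pos.2 (Real.exp_pos x)))
    calc x ^ m * (Real.exp x)⁻¹ ≤ m ^ m * Real.exp x * (Real.exp x)⁻¹ := this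
      _ = m ^ m := by field_simp
  calc Real.exp (-x) = x ^ (-m) * (x ^ m * Real.exp (-x)) := by
        rw [← mul_assoc, ← Real.rpow_add hx]; simp
    _ ≤ x ^ (-m) * m ^ m := mul_le_mul_of_nonneg_left h2 (by positivity)
    _ = m ^ m * x ^ (-m) := mul_comm _ _


lemma aux_pow_split (R : ℝ) (hR : 0 < R) (γ : ℝ) (n k : ℕ) :
    (R * 2 ^ k) ^ γ * (R * 2 ^ (k+1)) ^ (n:ℝ) =
      R ^ (γ + (n:ℝ)) * 2 ^ (n:ℝ) * ((2:ℝ) ^ (γ + (n:ℝ))) ^ k := by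
  have h2 : (0:ℝ) ≤ 2 := by norm_num
  rw [Real.mul_rpow hR.le (by positivity), Real.mul_rpow hR.le (by positivity),
    Real.rpow_add hR, ← Real.rpow_natCast (2:ℝ) k, ← Real.rpow_natCast (2:ℝ) (k+1),
    ← Real.rpow_natCast ((2:ℝ) ^ (γ + (n:ℝ))) k,
    ← Real.rpow_mul h2, ← Real.rpow_mul h2, ← Real.rpow_mul h2]
  rw [show R ^ γ * 2 ^ ((k:ℝ) * γ) * (R ^ (n:ℝ) * 2 ^ ((((k:ℕ) + 1 : ℕ):ℝ) * (n:ℝ)))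
      = (R ^ γ * R ^ (n:ℝ)) * (2 ^ ((k:ℝ) * γ) * 2 ^ ((((k:ℕ) + 1 : ℕ):ℝ) * (n:ℝ))) from by
        ring,
    ← Real.rpow_add (by norm_num : (0:ℝ) < 2),
    show ((k:ℝ) * γ + (((k:ℕ) + 1 : ℕ):ℝ) * (n:ℝ)) = (n:ℝ) + (γ + (n:ℝ)) * (k:ℝ) from by
      push_cast; ring,
    Real.rpow_add (by norm_num : (0:ℝ) < 2)]
  ring

/-- Tail integral of a negative power of the distance in Euclidean space. -/
lemma aux_geo (n : ℕ) (γ : ℝ) (hγ : γ + n < 0) :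
    ∃ Cg : ℝ≥0∞, Cg < ⊤ ∧ ∀ (z : EuclideanSpace ℝ (Fin n)) (R : ℝ), 0 < R →
      ∫⁻ w in {w | R ≤ dist z w}, (ENNReal.ofReal (dist z w)) ^ γ ≤
        ENNReal.ofReal (R ^ (γ + n)) * Cg := by
  set B : ℝ≥0∞ := volume (ball (0 : EuclideanSpace ℝ (Fin n)) 1) with hB
  set r0 : ℝ≥0∞ := ENNReal.ofReal (2 ^ (γ + n)) with hr0
  have hr0lt : r0 < 1 := by
    rw [hr0, ← ENNReal.ofReal_one]
    exact ENNReal.ofReal_lt_ofReal_iff_of_nonneg (by positivity) |>.2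
      (Real.rpow_lt_one_of_one_lt_of_neg one_lt_two hγ)
  refine ⟨ENNReal.ofReal (2 ^ (n : ℝ)) * B * (1 - r0)⁻¹, ?_, ?_⟩
  · refine ENNReal.mul_lt_top (ENNReal.mul_lt_top ENNReal.ofReal_lt_top ?_) ?_
    · exact measure_ball_lt_top
    · exact ENNReal.inv_lt_top.2 (tsub_pos_of_lt hr0lt)
  intro z R hR
  set A : ℕ → Set (EuclideanSpace ℝ (Fin n)) :=
    fun k => {w | R * 2 ^ k ≤ dist z w} ∩ {w | dist z w ≤ R * 2 ^ (k + 1)} with hA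
  have hcover : {w | R ≤ dist z w} ⊆ ⋃ k, A k := by
    intro w hw
    simp only [Set.mem_setOf_eq] at hw
    have hd : 0 < dist z w := lt_of_lt_of_le hR hw
    set x := dist z w / R with hx
    have hx1 : 1 ≤ x := (one_le_div hR).2 hw
    have hfl : 1 ≤ ⌊x⌋₊ := Nat.one_le_iff_ne_zero.2 (by
      simp [Nat.floor_eq_zero]; linarith)
    set k := Nat.log 2 ⌊x⌋₊ with hk
    refine Set.mem_iUnion.2 ⟨k, ?_, ?_⟩
    · have h1 : (2 : ℕ) ^ k ≤ ⌊x⌋₊ := Nat.pow_log_le_self 2 (by omega)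
      have h2 : ((2 : ℝ)) ^ k ≤ x := by
        calc ((2:ℝ)) ^ k = ((2 ^ k : ℕ) : ℝ) := by push_cast; ring
          _ ≤ (⌊x⌋₊ : ℝ) := by exact_mod_cast h1
          _ ≤ x := Nat.floor_le (by linarith)
      simp only [Set.mem_setOf_eq]
      calc R * 2 ^ k ≤ R * x := by nlinarith
        _ = dist z w := by rw [hx]; field_simp
    · have h1 : ⌊x⌋₊ < 2 ^ (k + 1) := Nat.lt_pow_succ_log_self one_lt_two _
      have h2 : x < ((2:ℝ)) ^ (k + 1) := by
        calc x < (⌊x⌋₊ : ℝ) + 1 := Nat.lt_floor_add_one x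
          _ ≤ ((2 ^ (k+1) : ℕ) : ℝ) := by exact_mod_cast h1
          _ = ((2:ℝ)) ^ (k+1) := by push_cast; ring
      simp only [Set.mem_setOf_eq]
      have : dist z w = R * x := by rw [hx]; field_simp
      rw [this]
      nlinarith
  calc ∫⁻ w in {w | R ≤ dist z w}, (ENNReal.ofReal (dist z w)) ^ γ
      ≤ ∫⁻ w in ⋃ k, A k, (ENNReal.ofReal (dist z w)) ^ γ := lintegral_mono_set hcover
    _ ≤ ∑' k, ∫⁻ w in A k, (ENNReal.ofReal (dist z w)) ^ γ := lintegral_iUnion_le _ _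
    _ ≤ ∑' k, ENNReal.ofReal (R ^ (γ + (n:ℝ)) * 2 ^ (n:ℝ) * ((2:ℝ) ^ (γ + (n:ℝ))) ^ k) * B := by
        refine ENNReal.tsum_le_tsum fun k => ?_
        have hmeas : MeasurableSet (A k) := by
          apply MeasurableSet.inter
          · exact measurableSet_le measurable_const (measurable_dist.comp
              (measurable_const.prodMk measurable_id))
          · exact measurableSet_le (measurable_dist.comp
              (measurable_const.prodMk measurable_id)) measurable_const
        have hRk : (0:ℝ) < R * 2 ^ k := by positivity
        have step1 : ∫⁻ w in A k, (ENNReal.ofReal (dist z w)) ^ γ ≤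
            ENNReal.ofReal ((R * 2 ^ k) ^ γ) * volume (A k) := by
          rw [← setLIntegral_const (A k) _]
          refine setLIntegral_mono' hmeas fun w hw => ?_
          rw [ENNReal.ofReal_rpow_of_pos (lt_of_lt_of_le hRk hw.1)]
          refine ENNReal.ofReal_le_ofReal ?_
          exact Real.rpow_le_rpow_of_nonpos hRk hw.1 (by
            have : (0:ℝ) ≤ (n:ℝ) := Nat.cast_nonneg n
            linarith)
        have step2 : volume (A k) ≤ ENNReal.ofReal ((R * 2 ^ (k+1)) ^ (n:ℝ)) * B := by
          have hc := Measure.addHaar_closedBall (volume) z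
            (show (0:ℝ) ≤ R * 2 ^ (k+1) by positivity)
          rw [finrank_euclideanSpace_fin] at hc
          calc volume (A k) ≤ volume (closedBall z (R * 2 ^ (k+1))) :=
                measure_mono (fun w hw => mem_closedBall'.2 hw.2)
            _ = ENNReal.ofReal ((R * 2 ^ (k+1)) ^ n) * B := hc
            _ = ENNReal.ofReal ((R * 2 ^ (k+1)) ^ (n:ℝ)) * B := by
                rw [Real.rpow_natCast]
        calc ∫⁻ w in A k, (ENNReal.ofReal (dist z w)) ^ γ
            ≤ ENNReal.ofReal ((R * 2 ^ k) ^ γ) * (ENNReal.ofReal ((R * 2 ^ (k+1)) ^ (n:ℝ)) * B) := by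
              refine le_trans step1 ?_
              exact mul_le_mul_right step2 _
          _ = ENNReal.ofReal ((R * 2 ^ k) ^ γ * (R * 2 ^ (k+1)) ^ (n:ℝ)) * B := by
              rw [ENNReal.ofReal_mul (by positivity), mul_assoc]
          _ = ENNReal.ofReal (R ^ (γ + (n:ℝ)) * 2 ^ (n:ℝ) * ((2:ℝ) ^ (γ + (n:ℝ))) ^ k) * B := by
              rw [aux_pow_split R hR γ n k]
    _ = (ENNReal.ofReal (R ^ (γ + (n:ℝ))) * ENNReal.ofReal (2 ^ (n:ℝ)) * B) * ∑' k, r0 ^ k := by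
        rw [← ENNReal.tsum_mul_left]
        congr 1
        funext k
        rw [ENNReal.ofReal_mul (by positivity), ENNReal.ofReal_mul (by positivity),
          ← ENNReal.ofReal_pow (by positivity)]
        ring
    _ = ENNReal.ofReal (R ^ (γ + (n:ℝ))) * (ENNReal.ofReal (2 ^ (n : ℝ)) * B * (1 - r0)⁻¹) := by
        rw [show (∑' k : ℕ, r0 ^ k) = (1 - r0)⁻¹ from ENNReal.tsum_geometric r0]
        ring

/-- Core single-kernel moment estimate. -/
lemma aux_core (n : ℕ) (C₁ C₂ a α N p : ℝ)
    (hC₁ : 0 < C₁) (hC₂ : 0 < C₂) (ha : 0 < a) (hα : 0 < α) (hN : 0 ≤ N) (hp : 0 < p)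
    (h2 : N + 1 < (n + p) / 2) (h2α : N + 1 < (n + p) / (2 * α)) :
    ∃ (𝒞 : ℝ≥0∞) (δ : ℝ), 𝒞 < ⊤ ∧ 0 < δ ∧
      ∀ u : ℝ, 0 < u → u ≤ 1/4 → ∀ (z : EuclideanSpace ℝ (Fin n))
        (k : EuclideanSpace ℝ (Fin n) → ℝ≥0∞),
        (∀ w, k w ≤ ENNReal.ofReal (C₁ * u ^ (-N))) →
        (∀ w, a * Real.sqrt u ≤ dist z w →
          k w ≤ ENNReal.ofReal (C₁ * u ^ (-N) * Real.exp (-C₂ * dist z w ^ (2*α) / u))) →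
        ∫⁻ w, ENNReal.ofReal (dist z w ^ p) * k w ≤ 𝒞 * ENNReal.ofReal (u ^ (1 + δ)) := by
  set δ₁ : ℝ := (n + p) / 2 - N - 1 with hδ₁
  set δ₂ : ℝ := (n + p) / (2 * α) - N - 1 with hδ₂
  have hδ₁pos : 0 < δ₁ := by rw [hδ₁]; linarith
  have hδ₂pos : 0 < δ₂ := by rw [hδ₂]; linarith
  set ε : ℝ := min 1 (δ₂ / (2 * α)) with hε
  have hεpos : 0 < ε := lt_min one_pos (by positivity)
  have hεα : ε * α ≤ δ₂ / 2 := by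
    have h1 : ε ≤ δ₂ / (2 * α) := min_le_right _ _
    calc ε * α ≤ (δ₂ / (2 * α)) * α := by nlinarith
      _ = δ₂ / 2 := by field_simp
  set m : ℝ := (n + p) / (2 * α) + ε with hm
  have hmpos : 0 < m := by
    rw [hm]
    have : (0:ℝ) < ((n:ℝ) + p) / (2 * α) := by positivity
    linarith
  set γ : ℝ := -(n:ℝ) - 2 * α * ε with hγdef
  have hγn : γ + (n:ℝ) < 0 := by rw [hγdef]; nlinarith
  set δ : ℝ := min δ₁ (δ₂ / 2) with hδ
  have hδpos : 0 < δ := lt_min hδ₁pos (by positivity)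
  have hδ₁le : δ ≤ δ₁ := min_le_left _ _
  have hδ₂le : δ ≤ δ₂ / 2 := min_le_right _ _
  have hεle : ε ≤ δ₂ / (2 * α) := min_le_right _ _
  clear_value δ₁ δ₂ ε m γ δ
  have hγeq : p + (2*α) * (-m) = γ := by
    rw [hγdef, hm]; field_simp; ring
  have he1 : 1 + δ ≤ ((n:ℝ) + p) / 2 - N := by
    rw [hδ₁] at hδ₁le; linarith
  have he2 : 1 + δ ≤ m - N + (γ + (n:ℝ)) / 2 := by
    have h3 : m - N + (γ + (n:ℝ)) / 2 = 1 + δ₂ + ε - ε * α := by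
      rw [hm, hγdef, hδ₂]; field_simp; ring
    rw [h3]; linarith
  obtain ⟨Cg, hCgfin, hCg⟩ := aux_geo n γ hγn
  set B : ℝ≥0∞ := volume (ball (0 : EuclideanSpace ℝ (Fin n)) 1) with hB
  set C₃ : ℝ := C₁ * m ^ m * C₂ ^ (-m) with hC₃
  have hC₃pos : 0 < C₃ := by rw [hC₃]; positivity
  clear_value C₃
  refine ⟨ENNReal.ofReal (C₁ * a ^ ((n:ℝ) + p)) * B +
      ENNReal.ofReal (C₃ * a ^ (γ + (n:ℝ))) * Cg, δ, ?_, hδpos, ?_⟩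
  · exact ENNReal.add_lt_top.2 ⟨ENNReal.mul_lt_top ENNReal.ofReal_lt_top measure_ball_lt_top,
      ENNReal.mul_lt_top ENNReal.ofReal_lt_top hCgfin⟩
  intro u hu hu14 z k h1 h2off
  have hu1 : u ≤ 1 := by linarith
  set R : ℝ := a * Real.sqrt u with hR
  have hRpos : 0 < R := by
    rw [hR]
    have := Real.sqrt_pos.2 hu
    positivity
  set S : Set (EuclideanSpace ℝ (Fin n)) := {w | R ≤ dist z w} with hS
  have hSmeas : MeasurableSet S :=
    measurableSet_le measurable_const (continuous_const.dist continuous_id).measurable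
  set g : EuclideanSpace ℝ (Fin n) → ℝ≥0∞ :=
    (closedBall z R).indicator (fun _ => ENNReal.ofReal (R ^ p * (C₁ * u ^ (-N)))) with hg
  set h : EuclideanSpace ℝ (Fin n) → ℝ≥0∞ :=
    S.indicator (fun w => ENNReal.ofReal (C₃ * u ^ (m - N)) * (ENNReal.ofReal (dist z w)) ^ γ)
    with hh
  have hptwise : ∀ w, ENNReal.ofReal (dist z w ^ p) * k w ≤ g w + h w := by
    intro w
    by_cases hd : dist z w ≤ R
    · have hgw : g w = ENNReal.ofReal (R ^ p * (C₁ * u ^ (-N))) :=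
        Set.indicator_of_mem (mem_closedBall'.2 hd) _
      have : ENNReal.ofReal (dist z w ^ p) * k w ≤ g w := by
        rw [hgw, ENNReal.ofReal_mul (by positivity)]
        exact mul_le_mul' (ENNReal.ofReal_le_ofReal
          (Real.rpow_le_rpow dist_nonneg hd hp.le)) (h1 w)
      exact le_trans this le_self_add
    · push_neg at hd
      have hdS : w ∈ S := le_of_lt hd
      have hr : 0 < dist z w := lt_trans hRpos hd
      set r : ℝ := dist z w with hrdef
      have hhw : h w = ENNReal.ofReal (C₃ * u ^ (m - N) * r ^ γ) := by
        rw [hh, Set.indicator_of_mem hdS, ENNReal.ofReal_rpow_of_pos hr,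
          ← ENNReal.ofReal_mul (by positivity), mul_assoc]
      have key_real : r ^ p * (C₁ * u ^ (-N) * Real.exp (-C₂ * r ^ (2*α) / u)) ≤
          C₃ * u ^ (m - N) * r ^ γ := by
        have hxpos : 0 < C₂ * r ^ (2*α) / u := by positivity
        have hexp : Real.exp (-C₂ * r ^ (2*α) / u) ≤
            m ^ m * (C₂ * r ^ (2*α) / u) ^ (-m) := by
          have := aux_exp_neg_le hxpos hmpos
          have harg : -(C₂ * r ^ (2*α) / u) = -C₂ * r ^ (2*α) / u := by ring
          rwa [harg] at this
        have hxval : (C₂ * r ^ (2*α) / u) ^ (-m) =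
            C₂ ^ (-m) * r ^ ((2*α) * (-m)) * u ^ m := by
          rw [Real.div_rpow (by positivity) hu.le,
            Real.mul_rpow hC₂.le (by positivity),
            ← Real.rpow_mul hr.le, Real.rpow_neg hu.le m, div_eq_mul_inv, inv_inv]
        calc r ^ p * (C₁ * u ^ (-N) * Real.exp (-C₂ * r ^ (2*α) / u))
            = (r ^ p * (C₁ * u ^ (-N))) * Real.exp (-C₂ * r ^ (2*α) / u) := by ring
          _ ≤ (r ^ p * (C₁ * u ^ (-N))) * (m ^ m * (C₂ * r ^ (2*α) / u) ^ (-m)) :=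
              mul_le_mul_of_nonneg_left hexp (by positivity)
          _ = C₃ * (u ^ (-N) * u ^ m) * (r ^ p * r ^ ((2*α) * (-m))) := by
              rw [hxval, hC₃]; ring
          _ = C₃ * u ^ (-N + m) * r ^ (p + (2*α) * (-m)) := by
              rw [← Real.rpow_add hu, ← Real.rpow_add hr]
          _ = C₃ * u ^ (m - N) * r ^ γ := by rw [hγeq, show -N + m = m - N from by ring]
      have : ENNReal.ofReal (r ^ p) * k w ≤ h w := by
        rw [hhw]
        calc ENNReal.ofReal (r ^ p) * k w
            ≤ ENNReal.ofReal (r ^ p) *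
              ENNReal.ofReal (C₁ * u ^ (-N) * Real.exp (-C₂ * r ^ (2*α) / u)) :=
              mul_le_mul_right (h2off w hdS) _
          _ = ENNReal.ofReal (r ^ p * (C₁ * u ^ (-N) * Real.exp (-C₂ * r ^ (2*α) / u))) := by
              rw [← ENNReal.ofReal_mul (by positivity)]
          _ ≤ ENNReal.ofReal (C₃ * u ^ (m - N) * r ^ γ) := ENNReal.ofReal_le_ofReal key_real
      exact le_trans this le_add_self
  have hgmeas : Measurable g := Measurable.indicator measurable_const measurableSet_closedBall
  have hfγmeas : Measurable fun w : EuclideanSpace ℝ (Fin n) =>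
      (ENNReal.ofReal (dist z w)) ^ γ :=
    (ENNReal.continuous_rpow_const.comp
      (ENNReal.continuous_ofReal.comp (continuous_const.dist continuous_id))).measurable
  -- integral of g
  have hintg : ∫⁻ w, g w ≤ ENNReal.ofReal (C₁ * a ^ ((n:ℝ) + p)) * B *
      ENNReal.ofReal (u ^ (1 + δ)) := by
    rw [hg, lintegral_indicator measurableSet_closedBall, setLIntegral_const]
    have hcb := Measure.addHaar_closedBall (volume) z hRpos.le
    rw [finrank_euclideanSpace_fin] at hcb
    rw [hcb, ← Real.rpow_natCast R n, ← hB]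
    have hreal : R ^ p * (C₁ * u ^ (-N)) * R ^ (n:ℝ) ≤
        C₁ * a ^ ((n:ℝ) + p) * u ^ (1 + δ) := by
      have hsq : Real.sqrt u = u ^ (1/2 : ℝ) := Real.sqrt_eq_rpow u
      have hRval : R ^ p * R ^ (n:ℝ) = a ^ ((n:ℝ) + p) * u ^ (((n:ℝ) + p) / 2) := by
        rw [← Real.rpow_add hRpos, hR, Real.mul_rpow ha.le (Real.sqrt_nonneg u), hsq,
          ← Real.rpow_mul hu.le, show p + (n:ℝ) = (n:ℝ) + p from by ring,
          show 1/2 * ((n:ℝ) + p) = ((n:ℝ) + p) / 2 from by ring]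
      have hupow : u ^ (-N) * u ^ (((n:ℝ) + p) / 2) = u ^ (((n:ℝ) + p) / 2 - N) := by
        rw [← Real.rpow_add hu, show -N + ((n:ℝ) + p) / 2 = ((n:ℝ) + p) / 2 - N from by ring]
      have hle : u ^ (((n:ℝ) + p) / 2 - N) ≤ u ^ (1 + δ) :=
        Real.rpow_le_rpow_of_exponent_ge hu hu1 he1
      calc R ^ p * (C₁ * u ^ (-N)) * R ^ (n:ℝ)
          = C₁ * (u ^ (-N) * (R ^ p * R ^ (n:ℝ))) := by ring
        _ = C₁ * a ^ ((n:ℝ) + p) * (u ^ (-N) * u ^ (((n:ℝ) + p) / 2)) := by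
            rw [hRval]; ring
        _ = C₁ * a ^ ((n:ℝ) + p) * u ^ (((n:ℝ) + p) / 2 - N) := by rw [hupow]
        _ ≤ C₁ * a ^ ((n:ℝ) + p) * u ^ (1 + δ) := by
            apply mul_le_mul_of_nonneg_left hle (by positivity)
    calc ENNReal.ofReal (R ^ p * (C₁ * u ^ (-N))) * (ENNReal.ofReal (R ^ (n:ℝ)) * B)
        = ENNReal.ofReal (R ^ p * (C₁ * u ^ (-N)) * R ^ (n:ℝ)) * B := by
          rw [ENNReal.ofReal_mul (by positivity : (0:ℝ) ≤ R ^ p * (C₁ * u ^ (-N)))]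
          ring
      _ ≤ ENNReal.ofReal (C₁ * a ^ ((n:ℝ) + p) * u ^ (1 + δ)) * B :=
          mul_le_mul_left (ENNReal.ofReal_le_ofReal hreal) _
      _ = ENNReal.ofReal (C₁ * a ^ ((n:ℝ) + p)) * B * ENNReal.ofReal (u ^ (1 + δ)) := by
          rw [ENNReal.ofReal_mul (by positivity : (0:ℝ) ≤ C₁ * a ^ ((n:ℝ) + p))]
          ring
  -- integral of h
  have hinth : ∫⁻ w, h w ≤ ENNReal.ofReal (C₃ * a ^ (γ + (n:ℝ))) * Cg *
      ENNReal.ofReal (u ^ (1 + δ)) := by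
    rw [hh, lintegral_indicator hSmeas,
      lintegral_const_mul'' _ hfγmeas.aemeasurable]
    have hgeo := hCg z R hRpos
    have hreal : u ^ (m - N) * R ^ (γ + (n:ℝ)) ≤ a ^ (γ + (n:ℝ)) * u ^ (1 + δ) := by
      have hsq : Real.sqrt u = u ^ (1/2 : ℝ) := Real.sqrt_eq_rpow u
      have hRval : R ^ (γ + (n:ℝ)) = a ^ (γ + (n:ℝ)) * u ^ ((γ + (n:ℝ)) / 2) := by
        rw [hR, Real.mul_rpow ha.le (Real.sqrt_nonneg u), hsq, ← Real.rpow_mul hu.le,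
          show 1/2 * (γ + (n:ℝ)) = (γ + (n:ℝ)) / 2 from by ring]
      have hupow : u ^ (m - N) * u ^ ((γ + (n:ℝ)) / 2) = u ^ (m - N + (γ + (n:ℝ)) / 2) :=
        (Real.rpow_add hu _ _).symm
      have hle : u ^ (m - N + (γ + (n:ℝ)) / 2) ≤ u ^ (1 + δ) :=
        Real.rpow_le_rpow_of_exponent_ge hu hu1 he2
      calc u ^ (m - N) * R ^ (γ + (n:ℝ))
          = a ^ (γ + (n:ℝ)) * (u ^ (m - N) * u ^ ((γ + (n:ℝ)) / 2)) := by rw [hRval]; ring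
        _ = a ^ (γ + (n:ℝ)) * u ^ (m - N + (γ + (n:ℝ)) / 2) := by rw [hupow]
        _ ≤ a ^ (γ + (n:ℝ)) * u ^ (1 + δ) := by
            apply mul_le_mul_of_nonneg_left hle (by positivity)
    calc ENNReal.ofReal (C₃ * u ^ (m - N)) * ∫⁻ w in S, (ENNReal.ofReal (dist z w)) ^ γ
        ≤ ENNReal.ofReal (C₃ * u ^ (m - N)) * (ENNReal.ofReal (R ^ (γ + (n:ℝ))) * Cg) :=
          mul_le_mul_right hgeo _
      _ = ENNReal.ofReal (C₃ * (u ^ (m - N) * R ^ (γ + (n:ℝ)))) * Cg := by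
          rw [ENNReal.ofReal_mul hC₃pos.le, ENNReal.ofReal_mul hC₃pos.le,
            ENNReal.ofReal_mul (by positivity : (0:ℝ) ≤ u ^ (m - N))]
          ring
      _ ≤ ENNReal.ofReal (C₃ * (a ^ (γ + (n:ℝ)) * u ^ (1 + δ))) * Cg := by
          apply mul_le_mul_left
          apply ENNReal.ofReal_le_ofReal
          exact mul_le_mul_of_nonneg_left hreal hC₃pos.le
      _ = ENNReal.ofReal (C₃ * a ^ (γ + (n:ℝ))) * Cg * ENNReal.ofReal (u ^ (1 + δ)) := by
          rw [ENNReal.ofReal_mul hC₃pos.le, ENNReal.ofReal_mul hC₃pos.le,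
            ENNReal.ofReal_mul (by positivity : (0:ℝ) ≤ a ^ (γ + (n:ℝ)))]
          ring
  calc ∫⁻ w, ENNReal.ofReal (dist z w ^ p) * k w ≤ ∫⁻ w, (g w + h w) :=
        lintegral_mono hptwise
    _ = (∫⁻ w, g w) + ∫⁻ w, h w := lintegral_add_left hgmeas _
    _ ≤ ENNReal.ofReal (C₁ * a ^ ((n:ℝ) + p)) * B * ENNReal.ofReal (u ^ (1 + δ)) +
        ENNReal.ofReal (C₃ * a ^ (γ + (n:ℝ))) * Cg * ENNReal.ofReal (u ^ (1 + δ)) :=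
        add_le_add hintg hinth
    _ = (ENNReal.ofReal (C₁ * a ^ ((n:ℝ) + p)) * B +
        ENNReal.ofReal (C₃ * a ^ (γ + (n:ℝ))) * Cg) * ENNReal.ofReal (u ^ (1 + δ)) :=
        (add_mul _ _ _).symm


/-- The bridge two-point moment of order `p` of the bridge from `x₀` to `y₀` at times
`s < t`: for `0 < s < t < 1` it is
`q₁(x₀,y₀)⁻¹ ∫∫ |x−y|^p q_s(x₀,x) q_{t−s}(x,y) q_{1−t}(y,y₀) dy dx`;
for `s = 0` it is `q₁(x₀,y₀)⁻¹ ∫ |x₀−y|^p q_t(x₀,y) q_{1−t}(y,y₀) dy`, and for `t = 1`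
it is `q₁(x₀,y₀)⁻¹ ∫ |x−y₀|^p q_s(x₀,x) q_{1−s}(x,y₀) dx`. -/
noncomputable def bridgeMoment (n : ℕ)
    (q : ℝ → EuclideanSpace ℝ (Fin n) → EuclideanSpace ℝ (Fin n) → ℝ≥0∞)
    (x₀ y₀ : EuclideanSpace ℝ (Fin n)) (p s t : ℝ) : ℝ≥0∞ :=
  if s = 0 then
    (q 1 x₀ y₀)⁻¹ * ∫⁻ y, ENNReal.ofReal (dist x₀ y ^ p) * (q t x₀ y * q (1 - t) y y₀)
  else if t = 1 then
    (q 1 x₀ y₀)⁻¹ * ∫⁻ x, ENNReal.ofReal (dist x y₀ ^ p) * (q s x₀ x * q (1 - s) x y₀)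
  else
    (q 1 x₀ y₀)⁻¹ *
      ∫⁻ x, ∫⁻ y,
        ENNReal.ofReal (dist x y ^ p) * (q s x₀ x * q (t - s) x y * q (1 - t) y y₀)

/-- under the Euclidean Kusuoka–Stroock-type small-time sub-Gaussian bounds,
a uniform large-time bound and sub-probability mass of the kernels, the bridge from `x₀`
to `y₀` satisfies the Kolmogorov-criterion moment bound
`E[|y_s − y_t|^p] ≤ C (t−s)^{1+δ}` for all `0 ≤ s < t ≤ 1` with `t − s ≤ t₀`, for every
`p > 0` with `(n+p)/2 > N+1` and `(n+p)/(2α) > N+1`. -/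
theorem bridge_kolmogorov_moment_bound
    (n : ℕ)
    (q : ℝ → EuclideanSpace ℝ (Fin n) → EuclideanSpace ℝ (Fin n) → ℝ≥0∞)
    (hq_meas : Measurable
      fun p : ℝ × EuclideanSpace ℝ (Fin n) × EuclideanSpace ℝ (Fin n) => q p.1 p.2.1 p.2.2)
    (C₁ C₂ a α N t₀ : ℝ)
    (hC₁ : 0 < C₁) (hC₂ : 0 < C₂) (ha : 0 < a) (hα : 0 < α) (hN : 0 ≤ N)
    (ht₀ : t₀ ∈ Set.Ioo (0 : ℝ) (1 / 4))
    (hondiag : ∀ u ∈ Set.Ioc (0 : ℝ) t₀, ∀ x y, q u x y ≤ ENNReal.ofReal (C₁ * u ^ (-N)))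
    (hoffdiag : ∀ u ∈ Set.Ioc (0 : ℝ) t₀, ∀ x y, a * Real.sqrt u ≤ dist x y →
        q u x y ≤ ENNReal.ofReal (C₁ * u ^ (-N) * Real.exp (-C₂ * dist x y ^ (2 * α) / u)))
    (hlarge : (⨆ r ∈ Set.Icc (1 / 4 : ℝ) 1, ⨆ x, ⨆ y, q r x y) < ⊤)
    (hmass_right : ∀ s ∈ Set.Ioc (0 : ℝ) 1, ∀ x, ∫⁻ y, q s x y ≤ 1)
    (hmass_left : ∀ s ∈ Set.Ioc (0 : ℝ) 1, ∀ y, ∫⁻ x, q s x y ≤ 1)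
    (x₀ y₀ : EuclideanSpace ℝ (Fin n))
    (hq₁_pos : 0 < q 1 x₀ y₀) (hq₁_fin : q 1 x₀ y₀ < ⊤) :
    ∀ p : ℝ, 0 < p → N + 1 < (n + p) / 2 → N + 1 < (n + p) / (2 * α) →
      ∃ C > (0 : ℝ), ∃ δ > (0 : ℝ), ∀ s t : ℝ, 0 ≤ s → s < t → t ≤ 1 → t - s ≤ t₀ →
        bridgeMoment n q x₀ y₀ p s t ≤ ENNReal.ofReal (C * (t - s) ^ (1 + δ)) := by
  intro p hp h2 h2α
  obtain ⟨ht₀pos, ht₀lt⟩ := ht₀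
  obtain ⟨𝒞, δ, h𝒞fin, hδpos, hcore⟩ :=
    aux_core n C₁ C₂ a α N p hC₁ hC₂ ha hα hN hp h2 h2α
  set K : ℝ≥0∞ := ⨆ r ∈ Set.Icc (1 / 4 : ℝ) 1, ⨆ x, ⨆ y, q r x y with hK
  have hKfin : K < ⊤ := hlarge
  have hKb : ∀ r ∈ Set.Icc (1 / 4 : ℝ) 1, ∀ x y, q r x y ≤ K := by
    intro r hr x y
    calc q r x y ≤ ⨆ y, q r x y := le_iSup _ y
      _ ≤ ⨆ x, ⨆ y, q r x y := le_iSup (fun x => ⨆ y, q r x y) x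
      _ ≤ K := le_iSup₂ (f := fun r (_ : r ∈ Set.Icc (1/4:ℝ) 1) => ⨆ x, ⨆ y, q r x y) r hr
  -- measurability helpers
  have mq2 : ∀ u : ℝ, Measurable fun xy :
      EuclideanSpace ℝ (Fin n) × EuclideanSpace ℝ (Fin n) => q u xy.1 xy.2 := fun u =>
    hq_meas.comp (measurable_const.prodMk (measurable_fst.prodMk measurable_snd))
  have mqL : ∀ (u : ℝ) z, Measurable fun w => q u z w := fun u z =>
    (mq2 u).comp (measurable_const.prodMk measurable_id)
  have mqR : ∀ (u : ℝ) z, Measurable fun w => q u w z := fun u z =>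
    (mq2 u).comp (measurable_id.prodMk measurable_const)
  have mdp : ∀ z : EuclideanSpace ℝ (Fin n),
      Measurable fun w => ENNReal.ofReal (dist z w ^ p) := fun z =>
    (ENNReal.continuous_ofReal.comp ((Real.continuous_rpow_const hp.le).comp
      (continuous_const.dist continuous_id))).measurable
  have mdp' : ∀ z : EuclideanSpace ℝ (Fin n),
      Measurable fun w => ENNReal.ofReal (dist w z ^ p) := fun z =>
    (ENNReal.continuous_ofReal.comp ((Real.continuous_rpow_const hp.le).comp
      (continuous_id.dist continuous_const))).measurable
  -- the overall constant
  set T : ℝ≥0∞ := (q 1 x₀ y₀)⁻¹ * K * 𝒞 with hT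
  have hTfin : T < ⊤ :=
    ENNReal.mul_lt_top (ENNReal.mul_lt_top (ENNReal.inv_lt_top.2 hq₁_pos) hKfin) h𝒞fin
  refine ⟨T.toReal + 1, by positivity, δ, hδpos, ?_⟩
  intro s t hs0 hst ht1 htt₀
  have hupos : 0 < t - s := by linarith
  have hu14 : t - s ≤ 1/4 := by linarith
  have huIoc : t - s ∈ Set.Ioc (0:ℝ) t₀ := ⟨hupos, htt₀⟩
  -- it suffices to bound by T * ofReal (u ^ (1+δ))
  have hsufficient : T * ENNReal.ofReal ((t - s) ^ (1 + δ)) ≤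
      ENNReal.ofReal ((T.toReal + 1) * (t - s) ^ (1 + δ)) := by
    rw [ENNReal.ofReal_mul (by positivity)]
    refine mul_le_mul_left ?_ _
    calc T = ENNReal.ofReal T.toReal := (ENNReal.ofReal_toReal hTfin.ne).symm
      _ ≤ ENNReal.ofReal (T.toReal + 1) := ENNReal.ofReal_le_ofReal (by linarith)
  refine le_trans ?_ hsufficient
  -- main case analysis
  by_cases hs : s = 0
  · -- s = 0
    subst hs
    rw [bridgeMoment, if_pos rfl]
    simp only [sub_zero] at hupos hu14 huIoc hsufficient ⊢
    have hKt : ∀ y, q (1 - t) y y₀ ≤ K := fun y =>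
      hKb (1 - t) ⟨by linarith, by linarith⟩ y y₀
    have hstep : ∀ y, ENNReal.ofReal (dist x₀ y ^ p) * (q t x₀ y * q (1 - t) y y₀) ≤
        (ENNReal.ofReal (dist x₀ y ^ p) * q t x₀ y) * K := fun y => by
      calc ENNReal.ofReal (dist x₀ y ^ p) * (q t x₀ y * q (1 - t) y y₀)
          = (ENNReal.ofReal (dist x₀ y ^ p) * q t x₀ y) * q (1 - t) y y₀ := by ring
        _ ≤ _ := mul_le_mul_right (hKt y) _
    have hcoreapp : ∫⁻ y, ENNReal.ofReal (dist x₀ y ^ p) * q t x₀ y ≤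
        𝒞 * ENNReal.ofReal (t ^ (1 + δ)) := by
      refine hcore t hupos hu14 x₀ (q t x₀) (fun w => hondiag t huIoc x₀ w)
        (fun w hw => hoffdiag t huIoc x₀ w hw)
    calc (q 1 x₀ y₀)⁻¹ * ∫⁻ y, ENNReal.ofReal (dist x₀ y ^ p) * (q t x₀ y * q (1 - t) y y₀)
        ≤ (q 1 x₀ y₀)⁻¹ * ∫⁻ y, (ENNReal.ofReal (dist x₀ y ^ p) * q t x₀ y) * K :=
          mul_le_mul_right (lintegral_mono hstep) _
      _ = (q 1 x₀ y₀)⁻¹ * ((∫⁻ y, ENNReal.ofReal (dist x₀ y ^ p) * q t x₀ y) * K) := by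
          rw [lintegral_mul_const'' K (f := fun y => ENNReal.ofReal (dist x₀ y ^ p) * q t x₀ y)
            ((mdp x₀).mul (mqL t x₀)).aemeasurable]
      _ ≤ (q 1 x₀ y₀)⁻¹ * ((𝒞 * ENNReal.ofReal (t ^ (1 + δ))) * K) :=
          mul_le_mul_right (mul_le_mul_left hcoreapp _) _
      _ = T * ENNReal.ofReal (t ^ (1 + δ)) := by rw [hT]; ring
  · by_cases ht : t = 1
    · -- t = 1
      subst ht
      rw [bridgeMoment, if_neg hs, if_pos rfl]
      have hs14 : (1:ℝ)/4 ≤ s := by linarith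
      have hs1 : s ≤ 1 := le_of_lt hst
      have hKs : ∀ x, q s x₀ x ≤ K := fun x => hKb s ⟨hs14, hs1⟩ x₀ x
      have hstep : ∀ x, ENNReal.ofReal (dist x y₀ ^ p) * (q s x₀ x * q (1 - s) x y₀) ≤
          (ENNReal.ofReal (dist x y₀ ^ p) * q (1 - s) x y₀) * K := fun x => by
        calc ENNReal.ofReal (dist x y₀ ^ p) * (q s x₀ x * q (1 - s) x y₀)
            = (ENNReal.ofReal (dist x y₀ ^ p) * q (1 - s) x y₀) * q s x₀ x := by ring
          _ ≤ _ := mul_le_mul_right (hKs x) _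
      have h1s : (1:ℝ) - s = 1 - s := rfl
      have huIoc' : (1:ℝ) - s ∈ Set.Ioc (0:ℝ) t₀ := by
        convert huIoc using 2 <;> ring
      have hupos' : (0:ℝ) < 1 - s := by linarith
      have hu14' : (1:ℝ) - s ≤ 1/4 := by linarith
      have hcoreapp : ∫⁻ x, ENNReal.ofReal (dist x y₀ ^ p) * q (1 - s) x y₀ ≤
          𝒞 * ENNReal.ofReal ((1 - s) ^ (1 + δ)) := by
        have := hcore (1 - s) hupos' hu14' y₀ (fun x => q (1 - s) x y₀)
          (fun w => hondiag (1 - s) huIoc' w y₀)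
          (fun w hw => by
            have := hoffdiag (1 - s) huIoc' w y₀ (by rwa [dist_comm])
            rwa [dist_comm w y₀] at this)
        calc ∫⁻ x, ENNReal.ofReal (dist x y₀ ^ p) * q (1 - s) x y₀
            = ∫⁻ x, ENNReal.ofReal (dist y₀ x ^ p) * q (1 - s) x y₀ :=
              lintegral_congr fun x => by rw [dist_comm]
          _ ≤ 𝒞 * ENNReal.ofReal ((1 - s) ^ (1 + δ)) := this
      calc (q 1 x₀ y₀)⁻¹ * ∫⁻ x, ENNReal.ofReal (dist x y₀ ^ p) * (q s x₀ x * q (1 - s) x y₀)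
          ≤ (q 1 x₀ y₀)⁻¹ * ∫⁻ x, (ENNReal.ofReal (dist x y₀ ^ p) * q (1 - s) x y₀) * K :=
            mul_le_mul_right (lintegral_mono hstep) _
        _ = (q 1 x₀ y₀)⁻¹ * ((∫⁻ x, ENNReal.ofReal (dist x y₀ ^ p) * q (1 - s) x y₀) * K) := by
            rw [lintegral_mul_const'' K (f := fun x => ENNReal.ofReal (dist x y₀ ^ p) * q (1 - s) x y₀)
              ((mdp' y₀).mul (mqR (1 - s) y₀)).aemeasurable]
        _ ≤ (q 1 x₀ y₀)⁻¹ * ((𝒞 * ENNReal.ofReal ((1 - s) ^ (1 + δ))) * K) :=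
            mul_le_mul_right (mul_le_mul_left hcoreapp _) _
        _ = T * ENNReal.ofReal ((1 - s) ^ (1 + δ)) := by rw [hT]; ring
    · -- 0 < s < t < 1
      rw [bridgeMoment, if_neg hs, if_neg ht]
      have hspos : 0 < s := lt_of_le_of_ne hs0 (Ne.symm hs)
      have htlt1 : t < 1 := lt_of_le_of_ne ht1 ht
      have hsIoc : s ∈ Set.Ioc (0:ℝ) 1 := ⟨hspos, by linarith⟩
      have h1tIoc : (1:ℝ) - t ∈ Set.Ioc (0:ℝ) 1 := ⟨by linarith, by linarith⟩
      by_cases hthalf : t ≤ 1/2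
      · -- bound q (1-t) by K, integrate y then x
        have hKt : ∀ y, q (1 - t) y y₀ ≤ K := fun y =>
          hKb (1 - t) ⟨by linarith, by linarith⟩ y y₀
        have hinner : ∀ x, (∫⁻ y, ENNReal.ofReal (dist x y ^ p) *
            (q s x₀ x * q (t - s) x y * q (1 - t) y y₀)) ≤
            q s x₀ x * (K * (𝒞 * ENNReal.ofReal ((t - s) ^ (1 + δ)))) := by
          intro x
          have hcoreapp : ∫⁻ y, ENNReal.ofReal (dist x y ^ p) * q (t - s) x y ≤
              𝒞 * ENNReal.ofReal ((t - s) ^ (1 + δ)) :=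
            hcore (t - s) hupos hu14 x (q (t - s) x) (fun w => hondiag (t - s) huIoc x w)
              (fun w hw => hoffdiag (t - s) huIoc x w hw)
          calc (∫⁻ y, ENNReal.ofReal (dist x y ^ p) *
              (q s x₀ x * q (t - s) x y * q (1 - t) y y₀))
              ≤ ∫⁻ y, (q s x₀ x * K) * (ENNReal.ofReal (dist x y ^ p) * q (t - s) x y) := by
                refine lintegral_mono fun y => ?_
                calc ENNReal.ofReal (dist x y ^ p) * (q s x₀ x * q (t - s) x y * q (1 - t) y y₀)
                    = (q s x₀ x * (ENNReal.ofReal (dist x y ^ p) * q (t - s) x y)) *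
                      q (1 - t) y y₀ := by ring
                  _ ≤ (q s x₀ x * (ENNReal.ofReal (dist x y ^ p) * q (t - s) x y)) * K :=
                      mul_le_mul_right (hKt y) _
                  _ = (q s x₀ x * K) * (ENNReal.ofReal (dist x y ^ p) * q (t - s) x y) := by ring
            _ = (q s x₀ x * K) * ∫⁻ y, ENNReal.ofReal (dist x y ^ p) * q (t - s) x y :=
                lintegral_const_mul'' _ ((mdp x).mul (mqL (t - s) x)).aemeasurable
            _ ≤ (q s x₀ x * K) * (𝒞 * ENNReal.ofReal ((t - s) ^ (1 + δ))) :=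
                mul_le_mul_right hcoreapp _
            _ = q s x₀ x * (K * (𝒞 * ENNReal.ofReal ((t - s) ^ (1 + δ)))) := by ring
        calc (q 1 x₀ y₀)⁻¹ * ∫⁻ x, ∫⁻ y, ENNReal.ofReal (dist x y ^ p) *
            (q s x₀ x * q (t - s) x y * q (1 - t) y y₀)
            ≤ (q 1 x₀ y₀)⁻¹ * ∫⁻ x, q s x₀ x * (K * (𝒞 * ENNReal.ofReal ((t - s) ^ (1 + δ)))) :=
              mul_le_mul_right (lintegral_mono hinner) _
          _ = (q 1 x₀ y₀)⁻¹ * ((∫⁻ x, q s x₀ x) * (K * (𝒞 * ENNReal.ofReal ((t - s) ^ (1 + δ))))) := by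
              rw [lintegral_mul_const'' _ (mqL s x₀).aemeasurable]
          _ ≤ (q 1 x₀ y₀)⁻¹ * (1 * (K * (𝒞 * ENNReal.ofReal ((t - s) ^ (1 + δ))))) := by
              refine mul_le_mul_right (mul_le_mul_left (hmass_right s hsIoc x₀) _) _
          _ = T * ENNReal.ofReal ((t - s) ^ (1 + δ)) := by rw [hT]; ring
      · -- t > 1/2, so s > 1/4 : bound q s by K, swap integrals
        push_neg at hthalf
        have hs14 : (1:ℝ)/4 ≤ s := by linarith
        have hKs : ∀ x, q s x₀ x ≤ K := fun x => hKb s ⟨hs14, hsIoc.2⟩ x₀ x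
        set G : EuclideanSpace ℝ (Fin n) → EuclideanSpace ℝ (Fin n) → ℝ≥0∞ :=
          fun x y => ENNReal.ofReal (dist x y ^ p) * q (t - s) x y * q (1 - t) y y₀ with hG
        have hGmeas : Measurable fun z :
            EuclideanSpace ℝ (Fin n) × EuclideanSpace ℝ (Fin n) => G z.1 z.2 := by
          apply Measurable.mul
          apply Measurable.mul
          · exact (ENNReal.continuous_ofReal.comp
              ((Real.continuous_rpow_const hp.le).comp continuous_dist)).measurable
          · exact mq2 (t - s)
          · exact (mqR (1 - t) y₀).comp measurable_snd
        have hswap : (∫⁻ x, ∫⁻ y, G x y) = ∫⁻ y, ∫⁻ x, G x y :=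
          lintegral_lintegral_swap hGmeas.aemeasurable
        have hinner : ∀ y, (∫⁻ x, G x y) ≤
            (𝒞 * ENNReal.ofReal ((t - s) ^ (1 + δ))) * q (1 - t) y y₀ := by
          intro y
          have hcoreapp : ∫⁻ x, ENNReal.ofReal (dist x y ^ p) * q (t - s) x y ≤
              𝒞 * ENNReal.ofReal ((t - s) ^ (1 + δ)) := by
            have := hcore (t - s) hupos hu14 y (fun x => q (t - s) x y)
              (fun w => hondiag (t - s) huIoc w y)
              (fun w hw => by
                have := hoffdiag (t - s) huIoc w y (by rwa [dist_comm])
                rwa [dist_comm w y] at this)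
            calc ∫⁻ x, ENNReal.ofReal (dist x y ^ p) * q (t - s) x y
                = ∫⁻ x, ENNReal.ofReal (dist y x ^ p) * q (t - s) x y :=
                  lintegral_congr fun x => by rw [dist_comm]
              _ ≤ _ := this
          calc (∫⁻ x, G x y)
              = (∫⁻ x, ENNReal.ofReal (dist x y ^ p) * q (t - s) x y) * q (1 - t) y y₀ := by
                rw [hG]
                exact lintegral_mul_const'' _
                  (((mdp' y).mul (mqR (t - s) y)).aemeasurable)
            _ ≤ (𝒞 * ENNReal.ofReal ((t - s) ^ (1 + δ))) * q (1 - t) y y₀ :=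
                mul_le_mul_left hcoreapp _
        calc (q 1 x₀ y₀)⁻¹ * ∫⁻ x, ∫⁻ y, ENNReal.ofReal (dist x y ^ p) *
            (q s x₀ x * q (t - s) x y * q (1 - t) y y₀)
            ≤ (q 1 x₀ y₀)⁻¹ * ∫⁻ x, ∫⁻ y, K * G x y := by
              refine mul_le_mul_right (lintegral_mono fun x => lintegral_mono fun y => ?_) _
              calc ENNReal.ofReal (dist x y ^ p) * (q s x₀ x * q (t - s) x y * q (1 - t) y y₀)
                  = q s x₀ x * G x y := by rw [hG]; ring
                _ ≤ K * G x y := mul_le_mul_left (hKs x) _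
          _ = (q 1 x₀ y₀)⁻¹ * (K * ∫⁻ x, ∫⁻ y, G x y) := by
              simp_rw [lintegral_const_mul' K _ hKfin.ne]
          _ = (q 1 x₀ y₀)⁻¹ * (K * ∫⁻ y, ∫⁻ x, G x y) := by rw [hswap]
          _ ≤ (q 1 x₀ y₀)⁻¹ * (K * ∫⁻ y, (𝒞 * ENNReal.ofReal ((t - s) ^ (1 + δ))) *
              q (1 - t) y y₀) :=
              mul_le_mul_right (mul_le_mul_right (lintegral_mono hinner) _) _
          _ = (q 1 x₀ y₀)⁻¹ * (K * ((𝒞 * ENNReal.ofReal ((t - s) ^ (1 + δ))) *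
              ∫⁻ y, q (1 - t) y y₀)) := by
              rw [lintegral_const_mul'' _ (mqR (1 - t) y₀).aemeasurable]
          _ ≤ (q 1 x₀ y₀)⁻¹ * (K * ((𝒞 * ENNReal.ofReal ((t - s) ^ (1 + δ))) * 1)) :=
              mul_le_mul_right (mul_le_mul_right
                (mul_le_mul_right (hmass_left (1 - t) h1tIoc y₀) _) _) _
          _ = T * ENNReal.ofReal ((t - s) ^ (1 + δ)) := by rw [hT]; ring
end
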